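/- arXiv:1404.0261 — 3 statements merged into one kernel-verified Lean document; each statement's English description precedes it below -/
import Mathlib

section
/- Let n and Δ be natural numbers with n > Δ, let δ > 0 and c₀ > 0 be real constants, and suppose Δ ≥ Δ₀ and (Δ:ℝ) ≥ n^δ, where Δ₀ is a sufficiently large constant (depending only on δ and c₀). Let S : ℕ → ℝ be a nonnegative function such that S(m) = 0 for every m ≤ Δ, and such that for every m with Δ < m ≤ n there exist natural numbers m₁, m₂ and real numbers α, β with 1/3 ≤ β ≤ α ≤ 2/3, α + β = 1, (m₁:ℝ) ≤ α·m + 2·√m, (m₂:ℝ) ≤ β·m + 2·√m, and S(m) ≤ c₀·√m·log m + S(m₁) + S(m₂). Then there exists a constant C (depending only on δ and c₀) such that S(n) ≤ C·(n/√(Δ/3) − √n)·log Δ. -/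
set_option maxHeartbeats 1000000

private lemma mono_aux {d a b : ℝ} (hd : 0 < d) (ha : 0 ≤ a) (hab : a ≤ b)
    (hs : d ≤ Real.sqrt a + Real.sqrt b) :
    a / d - Real.sqrt a ≤ b / d - Real.sqrt b := by
  have h1 : Real.sqrt a * Real.sqrt a = a := Real.mul_self_sqrt ha
  have h2 : Real.sqrt b * Real.sqrt b = b := Real.mul_self_sqrt (ha.trans hab)
  have h3 : Real.sqrt a ≤ Real.sqrt b := Real.sqrt_le_sqrt hab
  have h4 : (Real.sqrt b - Real.sqrt a) * d ≤
      (Real.sqrt b - Real.sqrt a) * (Real.sqrt a + Real.sqrt b) :=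
    mul_le_mul_of_nonneg_left hs (sub_nonneg.2 h3)
  have key : a - Real.sqrt a * d ≤ b - Real.sqrt b * d := by nlinarith [h4]
  calc a / d - Real.sqrt a = (a - Real.sqrt a * d) / d := by field_simp
    _ ≤ (b - Real.sqrt b * d) / d := by gcongr
    _ = b / d - Real.sqrt b := by field_simp

/-- If `d ≤ √x` then `(x + 2s)/d - √x ≥ 0` (for `s ≥ 0`). -/
private lemma fpos_aux {d x s : ℝ} (hd : 0 < d) (hx : 0 ≤ x) (hdx : d ≤ Real.sqrt x)
    (hs : 0 ≤ s) : 0 ≤ (x + 2 * s) / d - Real.sqrt x := by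
  have h1 : Real.sqrt x * Real.sqrt x = x := Real.mul_self_sqrt hx
  have h2 : Real.sqrt x * d ≤ Real.sqrt x * Real.sqrt x :=
    mul_le_mul_of_nonneg_left hdx (Real.sqrt_nonneg x)
  rw [sub_nonneg, le_div_iff₀ hd]
  linarith

/-- If `√k ≤ d` then `k/d ≤ √k`. -/
private lemma fneg_aux {d k : ℝ} (hd : 0 < d) (hk : 0 ≤ k) (hkd : Real.sqrt k ≤ d) :
    k / d ≤ Real.sqrt k := by
  have h1 : Real.sqrt k * Real.sqrt k = k := Real.mul_self_sqrt hk
  have h2 : Real.sqrt k * Real.sqrt k ≤ Real.sqrt k * d :=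
    mul_le_mul_of_nonneg_left hkd (Real.sqrt_nonneg k)
  rw [div_le_iff₀ hd]
  linarith

private lemma sqrt577 {s m x : ℝ} (hs : 0 ≤ s) (h2 : s * s = m) (hx : m / 3 ≤ x) :
    577 / 1000 * s ≤ Real.sqrt x := by
  have hm : 0 ≤ m := h2 ▸ mul_nonneg hs hs
  have hx0 : 0 ≤ x := by linarith
  rw [Real.le_sqrt (by positivity) hx0]
  nlinarith

/-- The abstract recurrence underlying Lemma 2: `S m` bounds the log of the
over-counting factor on sub-problems of size `m`. -/
theorem stmt_0 (δ c₀ : ℝ) (hδ : 0 < δ) (hc₀ : 0 < c₀) :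
    ∃ Δ₀ : ℕ, ∃ C : ℝ, ∀ n Δ : ℕ, n > Δ → Δ ≥ Δ₀ → (Δ : ℝ) ≥ (n : ℝ) ^ δ →
      ∀ S : ℕ → ℝ, (∀ m, 0 ≤ S m) → (∀ m, m ≤ Δ → S m = 0) →
        (∀ m, Δ < m → m ≤ n → ∃ m₁ m₂ : ℕ, ∃ α β : ℝ,
          1/3 ≤ β ∧ β ≤ α ∧ α ≤ 2/3 ∧ α + β = 1 ∧
          (m₁ : ℝ) ≤ α * m + 2 * Real.sqrt m ∧
          (m₂ : ℝ) ≤ β * m + 2 * Real.sqrt m ∧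
          S m ≤ c₀ * Real.sqrt m * Real.log m + S m₁ + S m₂) →
        S n ≤ C * ((n : ℝ) / Real.sqrt ((Δ : ℝ) / 3) - Real.sqrt n) * Real.log Δ := by
  refine ⟨19200, 10 * c₀ / δ, ?_⟩
  intro n Δ hnΔ hΔ₀ hΔδ S hSnn hS0 hrec
  set K : ℝ := 10 * c₀ / δ with hK
  have hKpos : 0 < K := by positivity
  have hΔR : (19200 : ℝ) ≤ (Δ : ℝ) := by exact_mod_cast hΔ₀
  have hΔpos : (0 : ℝ) < (Δ : ℝ) := by linarith
  set d : ℝ := Real.sqrt ((Δ : ℝ) / 3) with hdDef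
  have hd2 : d * d = (Δ : ℝ) / 3 := Real.mul_self_sqrt (by positivity)
  have hd80 : (80 : ℝ) ≤ d := by
    rw [hdDef, show (80:ℝ) = Real.sqrt 6400 by
      rw [show (6400:ℝ) = 80^2 by norm_num, Real.sqrt_sq (by norm_num)]]
    exact Real.sqrt_le_sqrt (by linarith)
  have hdpos : (0 : ℝ) < d := by linarith
  set L : ℝ := Real.log (Δ : ℝ) with hLdef
  have hL1 : (1 : ℝ) ≤ L := by
    rw [hLdef, Real.le_log_iff_exp_le hΔpos]
    have := Real.exp_one_lt_d9
    linarith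
  have hLpos : (0 : ℝ) < L := by linarith
  have hnpos : (0 : ℝ) < (n : ℝ) := by
    have : (Δ : ℝ) < (n : ℝ) := by exact_mod_cast hnΔ
    linarith
  have hlogn : Real.log (n : ℝ) ≤ L / δ := by
    have h1 : Real.log ((n : ℝ) ^ δ) ≤ L := Real.log_le_log (by positivity) hΔδ
    rw [Real.log_rpow hnpos] at h1
    rw [le_div_iff₀ hδ]
    linarith [h1]
  -- main claim by strong induction
  have main : ∀ m, m ≤ n →
      S m ≤ K * max ((m : ℝ) / d - Real.sqrt (m : ℝ)) 0 * L := by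
    intro m
    induction m using Nat.strong_induction_on with
    | _ m ih =>
      intro hmn
      by_cases hmΔ : m ≤ Δ
      · rw [hS0 m hmΔ]
        have : (0:ℝ) ≤ max ((m : ℝ) / d - Real.sqrt (m : ℝ)) 0 := le_max_right _ _
        positivity
      · push_neg at hmΔ
        obtain ⟨m₁, m₂, α, β, hβ3, hβα, hα3, hαβ, hm1, hm2, hSrec⟩ := hrec m hmΔ hmn
        have hmR : (Δ : ℝ) < (m : ℝ) := by exact_mod_cast hmΔ
        have hmnn : (0:ℝ) ≤ (m : ℝ) := Nat.cast_nonneg m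
        have hmbig : (19200 : ℝ) < (m : ℝ) := by linarith
        set sm : ℝ := Real.sqrt (m : ℝ) with hsmDef
        have hsm2 : sm * sm = (m : ℝ) := Real.mul_self_sqrt hmnn
        have hsm138 : (138 : ℝ) ≤ sm := by
          rw [hsmDef, show (138:ℝ) = Real.sqrt 19044 by
            rw [show (19044:ℝ) = 138^2 by norm_num, Real.sqrt_sq (by norm_num)]]
          exact Real.sqrt_le_sqrt (by linarith)
        have hsmpos : (0 : ℝ) < sm := by linarith
        have hα13 : (1:ℝ)/3 ≤ α := le_trans hβ3 hβα
        have h2sm : 2 * sm < (m : ℝ) / 3 := by nlinarith [hsm2, hsm138]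
        have hαm23 : α * (m:ℝ) ≤ 2/3 * (m:ℝ) := mul_le_mul_of_nonneg_right hα3 hmnn
        have hβm23 : β * (m:ℝ) ≤ 2/3 * (m:ℝ) :=
          mul_le_mul_of_nonneg_right (le_trans hβα hα3) hmnn
        have hm1lt : m₁ < m := by
          have : (m₁ : ℝ) < (m : ℝ) := by linarith
          exact_mod_cast this
        have hm2lt : m₂ < m := by
          have : (m₂ : ℝ) < (m : ℝ) := by linarith
          exact_mod_cast this
        have hαm : (Δ:ℝ)/3 ≤ α * (m:ℝ) := by
          have := mul_le_mul_of_nonneg_right hα13 hmnn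
          linarith
        have hβm : (Δ:ℝ)/3 ≤ β * (m:ℝ) := by
          have := mul_le_mul_of_nonneg_right hβ3 hmnn
          linarith
        have hαm0 : (0:ℝ) ≤ α * (m:ℝ) := le_trans (by positivity) hαm
        have hβm0 : (0:ℝ) ≤ β * (m:ℝ) := le_trans (by positivity) hβm
        set A : ℝ := (α * (m:ℝ) + 2 * sm) / d - Real.sqrt (α * (m:ℝ)) with hAdef
        set B : ℝ := (β * (m:ℝ) + 2 * sm) / d - Real.sqrt (β * (m:ℝ)) with hBdef
        have hdsa : d ≤ Real.sqrt (α * (m:ℝ)) := hdDef ▸ Real.sqrt_le_sqrt hαm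
        have hdsb : d ≤ Real.sqrt (β * (m:ℝ)) := hdDef ▸ Real.sqrt_le_sqrt hβm
        have hA0 : (0:ℝ) ≤ A := hAdef ▸ fpos_aux hdpos hαm0 hdsa hsmpos.le
        have hB0 : (0:ℝ) ≤ B := hBdef ▸ fpos_aux hdpos hβm0 hdsb hsmpos.le
        -- generic bound
        have hbound : ∀ (k : ℕ) (x : ℝ), (Δ:ℝ)/3 ≤ x → (k : ℝ) ≤ x + 2 * sm →
            (k : ℝ) / d - Real.sqrt (k : ℝ) ≤ (x + 2 * sm) / d - Real.sqrt x := by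
          intro k x hx hk
          have hx0 : (0:ℝ) ≤ x := le_trans (by positivity) hx
          have hdsx : d ≤ Real.sqrt x := hdDef ▸ Real.sqrt_le_sqrt hx
          by_cases h : (k : ℝ) ≤ (Δ:ℝ)/3
          · have hsk : Real.sqrt (k:ℝ) ≤ d := hdDef ▸ Real.sqrt_le_sqrt h
            have h1 : (k:ℝ) / d ≤ Real.sqrt (k:ℝ) := fneg_aux hdpos (Nat.cast_nonneg _) hsk
            have h2 : (0:ℝ) ≤ (x + 2 * sm) / d - Real.sqrt x :=
              fpos_aux hdpos hx0 hdsx hsmpos.le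
            linarith
          · push_neg at h
            have hsk : d ≤ Real.sqrt (k:ℝ) := hdDef ▸ Real.sqrt_le_sqrt h.le
            have h1 : (k:ℝ) / d - Real.sqrt (k:ℝ) ≤
                (x + 2 * sm) / d - Real.sqrt (x + 2 * sm) :=
              mono_aux hdpos (Nat.cast_nonneg _) hk
                (by linarith [Real.sqrt_nonneg (x + 2 * sm)])
            have h2 : Real.sqrt x ≤ Real.sqrt (x + 2 * sm) :=
              Real.sqrt_le_sqrt (by linarith)
            linarith
        have hfA : (m₁ : ℝ) / d - Real.sqrt (m₁:ℝ) ≤ A := hAdef ▸ hbound m₁ _ hαm hm1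
        have hfB : (m₂ : ℝ) / d - Real.sqrt (m₂:ℝ) ≤ B := hBdef ▸ hbound m₂ _ hβm hm2
        -- key: A + B ≤ m/d - sm - sm/10
        have hsa577 : 577 / 1000 * sm ≤ Real.sqrt (α * (m:ℝ)) := by
          apply sqrt577 hsmpos.le hsm2
          have := mul_le_mul_of_nonneg_right hα13 hmnn
          linarith
        have hsb577 : 577 / 1000 * sm ≤ Real.sqrt (β * (m:ℝ)) := by
          apply sqrt577 hsmpos.le hsm2
          have := mul_le_mul_of_nonneg_right hβ3 hmnn
          linarith
        have hsum : A + B = ((m:ℝ) + 4 * sm) / d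
            - Real.sqrt (α * (m:ℝ)) - Real.sqrt (β * (m:ℝ)) := by
          rw [hAdef, hBdef, show (m:ℝ) + 4 * sm = (α * (m:ℝ) + 2 * sm) + (β * (m:ℝ) + 2 * sm) by
            linear_combination (-(m:ℝ)) * hαβ, add_div]
          ring
        have h4d : 4 * sm / d ≤ sm / 20 := by
          rw [div_le_div_iff₀ hdpos (by norm_num)]
          have := mul_le_mul_of_nonneg_left hd80 hsmpos.le
          linarith
        have hABkey : A + B ≤ (m:ℝ) / d - sm - sm / 10 := by
          rw [hsum, add_div]
          linarith
        -- recurrence bounds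
        have hih1 : S m₁ ≤ K * A * L := by
          calc S m₁ ≤ K * max ((m₁ : ℝ) / d - Real.sqrt (m₁:ℝ)) 0 * L :=
                ih m₁ hm1lt (le_trans hm1lt.le hmn)
            _ ≤ K * A * L := by
                have := max_le hfA hA0
                gcongr
        have hih2 : S m₂ ≤ K * B * L := by
          calc S m₂ ≤ K * max ((m₂ : ℝ) / d - Real.sqrt (m₂:ℝ)) 0 * L :=
                ih m₂ hm2lt (le_trans hm2lt.le hmn)
            _ ≤ K * B * L := by
                have := max_le hfB hB0
                gcongr
        have hlogm : Real.log (m:ℝ) ≤ L / δ := by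
          have : Real.log (m:ℝ) ≤ Real.log (n:ℝ) :=
            Real.log_le_log (by linarith) (by exact_mod_cast hmn)
          linarith
        have hcost : c₀ * sm * Real.log (m:ℝ) ≤ c₀ / δ * sm * L := by
          have h1 : c₀ * sm * Real.log (m:ℝ) ≤ c₀ * sm * (L / δ) :=
            mul_le_mul_of_nonneg_left hlogm (by positivity)
          calc c₀ * sm * Real.log (m:ℝ) ≤ c₀ * sm * (L / δ) := h1
            _ = c₀ / δ * sm * L := by ring
        have hAB : K * A * L + K * B * L ≤ K * ((m:ℝ)/d - sm - sm/10) * L := by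
          have h1 : K * (A + B) * L ≤ K * ((m:ℝ)/d - sm - sm/10) * L := by gcongr
          calc K * A * L + K * B * L = K * (A + B) * L := by ring
            _ ≤ K * ((m:ℝ)/d - sm - sm/10) * L := h1
        have hfinal : S m ≤ K * ((m:ℝ)/d - sm) * L := by
          have hKc : K * (sm/10) * L = c₀ / δ * sm * L := by rw [hK]; ring
          calc S m ≤ c₀ * sm * Real.log (m:ℝ) + S m₁ + S m₂ := hSrec
            _ ≤ c₀ / δ * sm * L + K * A * L + K * B * L :=
                add_le_add (add_le_add hcost hih1) hih2
            _ = c₀ / δ * sm * L + (K * A * L + K * B * L) := by ring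
            _ ≤ c₀ / δ * sm * L + K * ((m:ℝ)/d - sm - sm/10) * L :=
                add_le_add (le_refl _) hAB
            _ = c₀ / δ * sm * L + K * ((m:ℝ)/d - sm) * L - K * (sm/10) * L := by ring
            _ = K * ((m:ℝ)/d - sm) * L := by rw [hKc]; ring
        have hmax : (m:ℝ)/d - sm ≤ max ((m:ℝ)/d - sm) 0 := le_max_left _ _
        calc S m ≤ K * ((m:ℝ)/d - sm) * L := hfinal
          _ ≤ K * max ((m:ℝ)/d - sm) 0 * L := by gcongr
  -- conclude
  have hmain := main n le_rfl
  have hfn : (0:ℝ) ≤ (n:ℝ)/d - Real.sqrt (n:ℝ) := by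
    have hΔn : (Δ:ℝ)/3 ≤ (n:ℝ) := by
      have : (Δ:ℝ) < (n:ℝ) := by exact_mod_cast hnΔ
      linarith
    have hsn : d ≤ Real.sqrt (n:ℝ) := hdDef ▸ Real.sqrt_le_sqrt hΔn
    have h1 : Real.sqrt (n:ℝ) * Real.sqrt (n:ℝ) = (n:ℝ) := Real.mul_self_sqrt hnpos.le
    have h2 : Real.sqrt (n:ℝ) * d ≤ Real.sqrt (n:ℝ) * Real.sqrt (n:ℝ) :=
      mul_le_mul_of_nonneg_left hsn (Real.sqrt_nonneg _)
    rw [sub_nonneg, le_div_iff₀ hdpos]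
    linarith
  rw [max_eq_left hfn] at hmain
  exact hmain
end

section
/- Let m, Δ, α, β, m₁, m₂ be real numbers with m ≥ 0, Δ ≥ 600, α + β = 1, 0 ≤ β ≤ α ≤ 2/3, α·m ≤ m₁ ≤ α·m + 2·√m, and β·m ≤ m₂ ≤ β·m + 2·√m. Then m₁/√(Δ/3) − √m₁ + m₂/√(Δ/3) − √m₂ ≤ m/√(Δ/3) − (1 + 1/10)·√m. -/
set_option maxHeartbeats 1000000 in
/-- Equation (2) in the proof of Lemma 2, with the explicit choice ε' = 1/10. -/
theorem stmt_2 (m Δ α β m₁ m₂ : ℝ) (hm : 0 ≤ m) (hΔ : 600 ≤ Δ)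
    (hsum : α + β = 1) (hβ0 : 0 ≤ β) (hβα : β ≤ α) (hα : α ≤ 2/3)
    (hm₁l : α * m ≤ m₁) (hm₁u : m₁ ≤ α * m + 2 * Real.sqrt m)
    (hm₂l : β * m ≤ m₂) (hm₂u : m₂ ≤ β * m + 2 * Real.sqrt m) :
    m₁ / Real.sqrt (Δ / 3) - Real.sqrt m₁ + m₂ / Real.sqrt (Δ / 3) - Real.sqrt m₂ ≤
      m / Real.sqrt (Δ / 3) - (1 + 1/10) * Real.sqrt m := by
  have hα0 : 0 ≤ α := le_trans hβ0 hβα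
  set s := Real.sqrt (Δ / 3) with hs_def
  set t := Real.sqrt m with ht_def
  set a := Real.sqrt α with ha_def
  set b := Real.sqrt β with hb_def
  have ht0 : 0 ≤ t := Real.sqrt_nonneg m
  have ht2 : t ^ 2 = m := Real.sq_sqrt hm
  have ha0 : 0 ≤ a := Real.sqrt_nonneg α
  have hb0 : 0 ≤ b := Real.sqrt_nonneg β
  have ha2 : a ^ 2 = α := Real.sq_sqrt hα0
  have hb2 : b ^ 2 = β := Real.sq_sqrt hβ0
  -- s ≥ 14
  have hs14 : (14 : ℝ) ≤ s := by
    have : Real.sqrt 196 ≤ s := Real.sqrt_le_sqrt (by linarith)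
    have h196 : Real.sqrt 196 = 14 := by
      rw [show (196 : ℝ) = 14 ^ 2 by norm_num, Real.sqrt_sq (by norm_num)]
    linarith
  have hs0 : 0 < s := by linarith
  -- 4/s ≤ 2/7
  have hdiv : 4 / s ≤ 2 / 7 := by
    rw [div_le_div_iff₀ hs0 (by norm_num)]
    linarith
  -- a * b ≥ 0.461
  have hβ13 : 1 / 3 ≤ β := by linarith
  have habsq : 2 / 9 ≤ (a * b) ^ 2 := by
    have : (a * b) ^ 2 = α * β := by rw [mul_pow, ha2, hb2]
    rw [this]
    nlinarith
  have hab0 : 0 ≤ a * b := mul_nonneg ha0 hb0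
  have hab : (461 : ℝ) / 1000 ≤ a * b := by nlinarith
  -- a + b ≥ 1.1 + 2/7 = 97/70
  have hsumab : (97 : ℝ) / 70 ≤ a + b := by
    have hsq : (a + b) ^ 2 = 1 + 2 * (a * b) := by
      have : (a + b) ^ 2 = a ^ 2 + b ^ 2 + 2 * (a * b) := by ring
      rw [this, ha2, hb2, hsum]
    nlinarith
  -- sqrt lower bounds
  have hA : a * t ≤ Real.sqrt m₁ := by
    have : Real.sqrt (α * m) ≤ Real.sqrt m₁ := Real.sqrt_le_sqrt hm₁l
    rwa [Real.sqrt_mul hα0] at this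
  have hB : b * t ≤ Real.sqrt m₂ := by
    have : Real.sqrt (β * m) ≤ Real.sqrt m₂ := Real.sqrt_le_sqrt hm₂l
    rwa [Real.sqrt_mul hβ0] at this
  -- divide sums
  have hsum12 : m₁ + m₂ ≤ m + 4 * t := by nlinarith
  have hdivsum : m₁ / s + m₂ / s ≤ m / s + (4 / s) * t := by
    rw [← add_div, ← sub_nonneg]
    have : m / s + (4 / s) * t - (m₁ + m₂) / s = (m + 4 * t - (m₁ + m₂)) / s := by
      field_simp
    rw [this]
    exact div_nonneg (by linarith) (le_of_lt hs0)
  have h4st : (4 / s) * t ≤ (2 / 7) * t := mul_le_mul_of_nonneg_right hdiv ht0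
  have hABt : (97 / 70 : ℝ) * t ≤ a * t + b * t := by
    have := mul_le_mul_of_nonneg_right hsumab ht0
    rw [add_mul] at this
    exact this
  have : m₁ / s + m₂ / s - (Real.sqrt m₁ + Real.sqrt m₂) ≤
      m / s + (2 / 7) * t - (97 / 70) * t := by linarith
  linarith
end

section
/- There exists a universal constant C > 0 with the following property. Let c ≥ 1 be a real number, let n and Δ be natural numbers with Δ ≥ 37, and let f : ℕ → ℝ be a function such that f(m) ≤ c·Δ for every m ≤ Δ, and such that for every m with Δ < m ≤ n there exists a natural number m' with (m':ℝ) ≤ 2·m/3 + 2·√m and f(m) ≤ f(m') + c·√m·log m. Then f(n) ≤ C·c·(√n·log n + Δ). -/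
lemma stmt4_key (m m' : ℕ) (hm : 37 ≤ m)
    (h : (m' : ℝ) ≤ 2 * m / 3 + 2 * Real.sqrt m) :
    m' < m ∧ Real.sqrt m' * Real.log m' ≤ (999/1000) * (Real.sqrt m * Real.log m) := by
  have hm37 : (37 : ℝ) ≤ (m : ℝ) := by exact_mod_cast hm
  have hm0 : (0 : ℝ) < (m : ℝ) := by linarith
  have hs : (6.08 : ℝ) ≤ Real.sqrt m := by
    nlinarith [Real.sq_sqrt hm0.le, Real.sqrt_nonneg (m : ℝ)]
  have hss : Real.sqrt m * Real.sqrt m = (m : ℝ) := Real.mul_self_sqrt hm0.le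
  have h2 : 2 * Real.sqrt m ≤ (25/76) * m := by
    have := mul_le_mul_of_nonneg_left hs (Real.sqrt_nonneg m)
    nlinarith [Real.sqrt_nonneg m]
  have hlt : (m' : ℝ) ≤ (227/228) * m := by linarith
  have hm'm : m' < m := by
    have : (m' : ℝ) < (m : ℝ) := by nlinarith
    exact_mod_cast this
  have hsqrt : Real.sqrt m' ≤ (999/1000) * Real.sqrt m := by
    have h1 : (m' : ℝ) ≤ (999/1000)^2 * m := by nlinarith
    calc Real.sqrt m' ≤ Real.sqrt ((999/1000)^2 * m) := Real.sqrt_le_sqrt h1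
      _ = (999/1000) * Real.sqrt m := by
          rw [Real.sqrt_mul (by positivity), Real.sqrt_sq (by norm_num)]
  have hlog0' : 0 ≤ Real.log m' := Real.log_natCast_nonneg m'
  have hlog : Real.log m' ≤ Real.log m := by
    rcases Nat.eq_zero_or_pos m' with h0 | hpos
    · simp [h0]; exact Real.log_nonneg (by linarith)
    · exact Real.log_le_log (by exact_mod_cast hpos) (by exact_mod_cast hm'm.le)
  refine ⟨hm'm, ?_⟩
  have := mul_le_mul hsqrt hlog hlog0' (by positivity)
  linarith [this]

/-- The running-time recurrence: `f m` stands for the log of the running time on a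
sub-problem of size `m`. -/
theorem stmt_4 :
    ∃ C : ℝ, 0 < C ∧ ∀ c : ℝ, 1 ≤ c → ∀ n Δ : ℕ, 37 ≤ Δ →
      ∀ f : ℕ → ℝ, (∀ m, m ≤ Δ → f m ≤ c * Δ) →
        (∀ m, Δ < m → m ≤ n → ∃ m' : ℕ,
          (m' : ℝ) ≤ 2 * m / 3 + 2 * Real.sqrt m ∧
          f m ≤ f m' + c * Real.sqrt m * Real.log m) →
        f n ≤ C * c * (Real.sqrt n * Real.log n + Δ) := by
  refine ⟨1000, by norm_num, ?_⟩
  intro c hc n Δ hΔ f hbase hrec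
  have hc0 : (0 : ℝ) < c := lt_of_lt_of_le one_pos hc
  suffices H : ∀ m, m ≤ n → f m ≤ 1000 * c * (Real.sqrt m * Real.log m + Δ) from H n le_rfl
  intro m
  induction m using Nat.strong_induction_on with
  | _ m ih =>
    intro hmn
    have hS : (0 : ℝ) ≤ Real.sqrt m * Real.log m :=
      mul_nonneg (Real.sqrt_nonneg m) (Real.log_natCast_nonneg m)
    have hΔ0 : (0 : ℝ) ≤ (Δ : ℝ) := Nat.cast_nonneg Δ
    by_cases hmΔ : m ≤ Δ
    · have hb := hbase m hmΔ
      nlinarith [mul_nonneg hc0.le hS, mul_nonneg hc0.le hΔ0]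
    · push_neg at hmΔ
      obtain ⟨m', hm'le, hfm⟩ := hrec m hmΔ hmn
      obtain ⟨hlt, hS'⟩ := stmt4_key m m' (by omega) hm'le
      have ihm' := ih m' hlt (by omega)
      nlinarith [mul_le_mul_of_nonneg_left hS' hc0.le]
end
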